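/- For the log-price in the signature model with S_0 = 1, the identity E[log(S_T(ℓ))] = −(1/2) ℓ^T Q^{0,cv}(T) ℓ holds, where Q^{0,cv}_{ℒ(I)ℒ(J)}(T) = vec((e_I ⧢ e_J) ⊗ e_0)^T e^{T G^T} vec(𝕏̂_0^{2n+1}); i.e., the linear (stochastic-integral) part of log(S_T(ℓ)) has zero expectation and the quadratic part has deterministic expectation expressible via the matrix exponential of the dual operator. -/

import Mathlib

open MeasureTheory intervalIntegral

/-- Words (multi-indices) over an alphabet of `d` letters. -/
abbrev Word (d : ℕ) := List (Fin d)

/-- The shuffle product of two words, as a multiset of words. -/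
def shuffle {d : ℕ} : Word d → Word d → Multiset (Word d)
  | [], J => {J}
  | I, [] => {I}
  | i :: I, j :: J =>
      (shuffle I (j :: J)).map (i :: ·) + (shuffle (i :: I) J).map (j :: ·)
  termination_by I J => I.length + J.length

/-- Pairing of a linear functional on words with a formal sum of words. -/
def pairWith {d : ℕ} (f : Word d → ℝ) (m : Multiset (Word d)) : ℝ :=
  (m.map f).sum

/-- Coefficient of the word `K` in `e_I ⧢ u`, for a finitely supported `u ∈ T(ℝ^d)`. -/
noncomputable def shufCoeff {d : ℕ} (I : Word d) (u : Word d →₀ ℝ) (K : Word d) : ℝ :=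
  ∑ J ∈ u.support, u J * ((shuffle I J).count K : ℝ)

/-- The dual operator `L`:
`L e_∅ = 0`, `L e_I = e_{I'} ⧢ 𝐛_{i_{|I|}} + (1/2) e_{I''} ⧢ 𝐚_{i_{|I|-1} i_{|I|}}`
(coefficient of `e_K`), where `𝐛_j, 𝐚_{ij} ∈ T(ℝ^d)` encode drift and diffusion. -/
noncomputable def Lop {d : ℕ} (b : Fin d → Word d →₀ ℝ) (a : Fin d → Fin d → Word d →₀ ℝ)
    (I : Word d) : Word d → ℝ :=
  match I.reverse with
  | [] => 0
  | [i] => shufCoeff ([] : Word d) (b i)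
  | i :: j :: Irr => fun K =>
      shufCoeff (j :: Irr).reverse (b i) K + (1 / 2) * shufCoeff Irr.reverse (a j i) K



theorem length_of_mem_shuffle {d : ℕ} : ∀ (I J K : Word d), K ∈ shuffle I J →
    K.length = I.length + J.length
  | [], J, K, h => by
      simp [shuffle] at h; simp [h]
  | (i :: I), [], K, h => by
      simp [shuffle] at h; simp [h]
  | (i :: I), (j :: J), K, h => by
      rw [shuffle] at h
      rcases Multiset.mem_add.1 h with h' | h' <;>
        obtain ⟨K', hK', rfl⟩ := Multiset.mem_map.1 h'
      · have := length_of_mem_shuffle I (j :: J) K' hK'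
        simp at this ⊢; omega
      · have := length_of_mem_shuffle (i :: I) J K' hK'
        simp at this ⊢; omega
  termination_by I J => I.length + J.length

/-- **Expected log-price** (Remark 7.8, control variate for SPX options).  With `S_0 = 1`,
`log S_T(ℓ) = −(1/2) ℓᵀ Q⁰(T) ℓ + Σ_{|I|≤n} ℓ_I ⟨ẽ_I^B, ℤ̂_T⟩`, the linear
(stochastic-integral) part being centered martingales, one gets
`E[log S_T(ℓ)] = −(1/2) ℓᵀ Q^{0,cv}(T) ℓ` with
`Q^{0,cv}_{ℒ(I)ℒ(J)}(T) = vec((e_I⧢e_J)⊗e_0)ᵀ e^{TGᵀ} vec(𝕏̂_0^{2n+1})`. -/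
theorem expected_log_price
    {d n : ℕ} {Ω : Type} [MeasurableSpace Ω] (μ : Measure Ω) [IsProbabilityMeasure μ]
    (ℱ : Filtration ℝ (by infer_instance : MeasurableSpace Ω))
    (S : ℝ → Ω → ℝ)
    (sigX : Word (d + 1) → ℝ → Ω → ℝ)
    (etil : Word (d + 1) → ℝ → Ω → ℝ)
    (𝒲n : Finset (Word (d + 1))) (h𝒲n : ∀ K : Word (d + 1), K ∈ 𝒲n ↔ K.length ≤ n)
    (𝒲 : Finset (Word (d + 1))) (h𝒲 : ∀ K : Word (d + 1), K ∈ 𝒲 ↔ K.length ≤ 2 * n + 1)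
    (G : Matrix 𝒲 𝒲 ℝ)
    (T : ℝ) (hT : 0 ≤ T)
    (ℓ : Word (d + 1) → ℝ)
    -- the log-price representation (Proposition 7.4):
    (hlog : ∀ ω, Real.log (S T ω)
        = -(1 / 2) * (∑ I ∈ 𝒲n, ∑ J ∈ 𝒲n, ℓ I * ℓ J *
            pairWith (fun K => sigX K T ω) ((shuffle I J).map (· ++ [0])))
          + ∑ I ∈ 𝒲n, ℓ I * etil I T ω)
    -- the components ⟨ẽ_I^B, ℤ̂⟩ are Itô integrals, hence centered martingales:
    (hmart : ∀ I : Word (d + 1), Martingale (etil I) ℱ μ)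
    (hetil0 : ∀ I ω, etil I 0 ω = 0)
    -- unconditional moment formula with vec(𝕏̂_0^{2n+1}) = e_∅:
    (hmoment0 : ∀ I : 𝒲, ∫ ω, sigX I.1 T ω ∂μ
      = ∑ J : 𝒲, NormedSpace.exp (T • G.transpose) I J * (if J.1 = [] then (1:ℝ) else 0))
    (hint : ∀ I : 𝒲, Integrable (sigX I.1 T) μ)
    (hSint : Integrable (fun ω => Real.log (S T ω)) μ) :
    ∫ ω, Real.log (S T ω) ∂μ
      = -(1 / 2) * ∑ I ∈ 𝒲n, ∑ J ∈ 𝒲n, ℓ I * ℓ J *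
          ∑ K : 𝒲, ∑ H : 𝒲, (((shuffle I J).map (· ++ [0])).count K.1 : ℝ) *
            NormedSpace.exp (T • G.transpose) K H *
            (if H.1 = [] then (1:ℝ) else 0) := by
  classical
  set E := NormedSpace.exp (T • G.transpose) with hE
  have key : ∀ I ∈ 𝒲n, ∀ J ∈ 𝒲n, ∀ f : Word (d + 1) → ℝ,
      pairWith f ((shuffle I J).map (· ++ [0]))
        = ∑ K : 𝒲, (((shuffle I J).map (· ++ [0])).count K.1 : ℝ) * f K.1 := by
    intro I hI J hJ f
    set m := (shuffle I J).map (· ++ [0]) with hm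
    have hsub : m.toFinset ⊆ 𝒲 := by
      intro K hK
      rw [Multiset.mem_toFinset, hm, Multiset.mem_map] at hK
      obtain ⟨K', hK', rfl⟩ := hK
      have hlen := length_of_mem_shuffle I J K' hK'
      have hIlen : I.length ≤ n := (h𝒲n I).1 hI
      have hJlen : J.length ≤ n := (h𝒲n J).1 hJ
      rw [h𝒲]
      simp only [List.length_append, List.length_cons, List.length_nil]
      omega
    rw [pairWith, Finset.sum_multiset_map_count]
    rw [Finset.sum_coe_sort 𝒲 (fun K => ((m.count K : ℝ)) * f K)]
    rw [Finset.sum_subset hsub (fun K _ hK => by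
      rw [Multiset.count_eq_zero_of_notMem (by simpa using hK)]
      simp)]
    refine Finset.sum_congr rfl fun K _ => ?_
    rw [nsmul_eq_mul]
  have hlin0 : ∀ I : Word (d + 1), ∫ ω, etil I T ω ∂μ = 0 := by
    intro I
    have h1 := (hmart I).condExp_ae_eq hT
    have h2 : ∫ ω, etil I T ω ∂μ = ∫ ω, etil I 0 ω ∂μ := by
      rw [← integral_condExp (ℱ.le 0)]
      exact integral_congr_ae h1
    simp [h2, hetil0]
  have hqint : ∀ I ∈ 𝒲n, ∀ J ∈ 𝒲n, Integrable (fun ω => ℓ I * ℓ J *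
      pairWith (fun K => sigX K T ω) ((shuffle I J).map (· ++ [0]))) μ := by
    intro I hI J hJ
    have heq : (fun ω => ℓ I * ℓ J *
        pairWith (fun K => sigX K T ω) ((shuffle I J).map (· ++ [0])))
        = fun ω => ℓ I * ℓ J *
          ∑ K : 𝒲, (((shuffle I J).map (· ++ [0])).count K.1 : ℝ) * sigX K.1 T ω := by
      funext ω; rw [key I hI J hJ]
    rw [heq]
    exact (integrable_finset_sum _ (fun K _ => (hint K).const_mul _)).const_mul _
  have hquadInt : Integrable (fun ω => -(1 / 2) * (∑ I ∈ 𝒲n, ∑ J ∈ 𝒲n, ℓ I * ℓ J *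
      pairWith (fun K => sigX K T ω) ((shuffle I J).map (· ++ [0])))) μ := by
    apply Integrable.const_mul
    exact integrable_finset_sum _ (fun I hI =>
      integrable_finset_sum _ (fun J hJ => hqint I hI J hJ))
  have hlinInt : Integrable (fun ω => ∑ I ∈ 𝒲n, ℓ I * etil I T ω) μ :=
    integrable_finset_sum _ (fun I hI => ((hmart I).integrable T).const_mul _)
  calc ∫ ω, Real.log (S T ω) ∂μ
      = ∫ ω, (-(1 / 2) * (∑ I ∈ 𝒲n, ∑ J ∈ 𝒲n, ℓ I * ℓ J *
            pairWith (fun K => sigX K T ω) ((shuffle I J).map (· ++ [0])))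
          + ∑ I ∈ 𝒲n, ℓ I * etil I T ω) ∂μ :=
        integral_congr_ae (Filter.Eventually.of_forall fun ω => hlog ω)
    _ = (∫ ω, -(1 / 2) * (∑ I ∈ 𝒲n, ∑ J ∈ 𝒲n, ℓ I * ℓ J *
            pairWith (fun K => sigX K T ω) ((shuffle I J).map (· ++ [0]))) ∂μ)
        + ∫ ω, ∑ I ∈ 𝒲n, ℓ I * etil I T ω ∂μ := integral_add hquadInt hlinInt
    _ = (∫ ω, -(1 / 2) * (∑ I ∈ 𝒲n, ∑ J ∈ 𝒲n, ℓ I * ℓ J *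
            pairWith (fun K => sigX K T ω) ((shuffle I J).map (· ++ [0]))) ∂μ) := by
        rw [integral_finset_sum _ (fun I _ => ((hmart I).integrable T).const_mul _)]
        rw [Finset.sum_congr rfl (fun I _ => by
          rw [MeasureTheory.integral_const_mul, hlin0 I, mul_zero])]
        simp
    _ = -(1 / 2) * ∑ I ∈ 𝒲n, ∑ J ∈ 𝒲n, ℓ I * ℓ J *
          ∑ K : 𝒲, ∑ H : 𝒲, (((shuffle I J).map (· ++ [0])).count K.1 : ℝ) *
            E K H * (if H.1 = [] then (1:ℝ) else 0) := by
        rw [MeasureTheory.integral_const_mul]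
        congr 1
        rw [integral_finset_sum _ (fun I hI =>
          integrable_finset_sum _ (fun J hJ => hqint I hI J hJ))]
        refine Finset.sum_congr rfl fun I hI => ?_
        rw [integral_finset_sum _ (fun J hJ => hqint I hI J hJ)]
        refine Finset.sum_congr rfl fun J hJ => ?_
        have heq : (fun ω => ℓ I * ℓ J *
            pairWith (fun K => sigX K T ω) ((shuffle I J).map (· ++ [0])))
            = fun ω => ℓ I * ℓ J *
              ∑ K : 𝒲, (((shuffle I J).map (· ++ [0])).count K.1 : ℝ) * sigX K.1 T ω := by
          funext ω; rw [key I hI J hJ]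
        rw [heq, MeasureTheory.integral_const_mul,
          integral_finset_sum _ (fun K _ => (hint K).const_mul _)]
        congr 1
        refine Finset.sum_congr rfl fun K _ => ?_
        rw [MeasureTheory.integral_const_mul, hmoment0 K, Finset.mul_sum]
        exact Finset.sum_congr rfl fun H _ => by rw [hE]; ring
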